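/- Fix m_c > 0, m_r > 0 and D ≥ 0, and for z > 0 let γ(z) = z·m_c/m_r, V(γ) = 1 − (1+γ)^{−2}, and ε(z) = Q( √(m_r / V(γ(z))) · (log₂(1+γ(z)) − D/m_r) · ln 2 ), where Q(x) = ∫_x^∞ (1/√(2π)) e^{−t²/2} dt. Then ε(z) is (strictly) decreasing in z on (0, ∞); consequently, with M = m_c + m_r, the time-average AoI Δ̄(z) = M/2 + M/(1 − ε(z)) is (strictly) decreasing in z on (0, ∞). In particular, introducing into the cluster an additional device with channel gain at least as good as the worst existing device, and giving it the same charging and update durations, does not increase the minimized maximum time-average AoI. -/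

import Mathlib

open MeasureTheory

/-- The Gaussian Q-function `Q(x) = ∫_x^∞ (1/√(2π))·e^{−t²/2} dt`. -/
noncomputable def gaussQ (x : ℝ) : ℝ :=
  ∫ t in Set.Ioi x, (Real.sqrt (2 * Real.pi))⁻¹ * Real.exp (-t ^ 2 / 2)

/-- Finite-blocklength packet error probability of a device with channel gain `z`,
charging duration `mc`, update duration `mr` and packet size `D`:
`ε = Q(√(mr/V(γ))·(log₂(1+γ) − D/mr)·ln 2)` with `γ = z·mc/mr` and
`V(γ) = 1 − (1+γ)^{−2}`. -/
noncomputable def errProb (mc mr D z : ℝ) : ℝ :=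
  gaussQ (Real.sqrt (mr / (1 - ((1 + z * mc / mr) ^ 2)⁻¹)) *
    (Real.logb 2 (1 + z * mc / mr) - D / mr) * Real.log 2)

/-- Time-average AoI `Δ̄ = M/2 + M/(1−ε)` with `M = mc + mr`. -/
noncomputable def avgAoI (mc mr D z : ℝ) : ℝ :=
  (mc + mr) / 2 + (mc + mr) / (1 - errProb mc mr D z)

/-- The standard normal density. -/
noncomputable def gaussDen (t : ℝ) : ℝ :=
  (Real.sqrt (2 * Real.pi))⁻¹ * Real.exp (-t ^ 2 / 2)

lemma gaussDen_pos (t : ℝ) : 0 < gaussDen t := by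
  have h2π : (0:ℝ) < 2 * Real.pi := by positivity
  exact mul_pos (inv_pos.2 (Real.sqrt_pos.2 h2π)) (Real.exp_pos _)

lemma gaussDen_integrable : Integrable gaussDen := by
  have h : Integrable (fun t : ℝ => Real.exp (-(1/2) * t ^ 2)) :=
    integrable_exp_neg_mul_sq (by norm_num)
  have := h.const_mul (Real.sqrt (2 * Real.pi))⁻¹
  convert this using 2 with t
  · unfold gaussDen
    congr 1
    ring_nf

lemma gaussDen_total : ∫ t, gaussDen t = 1 := by
  have h : ∫ t : ℝ, Real.exp (-(1/2) * t ^ 2) = Real.sqrt (Real.pi / (1/2)) :=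
    integral_gaussian (1/2)
  have heq : ∫ t, gaussDen t = (Real.sqrt (2 * Real.pi))⁻¹ * ∫ t : ℝ, Real.exp (-(1/2) * t ^ 2) := by
    rw [← integral_const_mul]
    congr 1 with t
    unfold gaussDen
    congr 1
    ring_nf
  rw [heq, h, show Real.pi / (1/2) = 2 * Real.pi by ring]
  have : Real.sqrt (2 * Real.pi) ≠ 0 := by positivity
  field_simp

lemma gaussQ_eq (x : ℝ) : gaussQ x = 1 - ∫ t in Set.Iic x, gaussDen t := by
  have h := intervalIntegral.integral_Iic_add_Ioi (b := x) (μ := volume)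
    gaussDen_integrable.integrableOn gaussDen_integrable.integrableOn
  rw [gaussDen_total] at h
  have : gaussQ x = ∫ t in Set.Ioi x, gaussDen t := rfl
  rw [this]
  linarith

lemma gaussQ_strictAnti : StrictAnti gaussQ := by
  intro x y hxy
  rw [gaussQ_eq, gaussQ_eq]
  have h : (∫ t in Set.Iic y, gaussDen t) - ∫ t in Set.Iic x, gaussDen t
      = ∫ t in x..y, gaussDen t :=
    intervalIntegral.integral_Iic_sub_Iic gaussDen_integrable.integrableOn gaussDen_integrable.integrableOn
  have hpos : 0 < ∫ t in x..y, gaussDen t :=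
    intervalIntegral.intervalIntegral_pos_of_pos gaussDen_integrable.intervalIntegrable gaussDen_pos hxy
  linarith

lemma gaussQ_lt_one (x : ℝ) : gaussQ x < 1 := by
  rw [gaussQ_eq]
  have h : (∫ t in Set.Iic x, gaussDen t) - ∫ t in Set.Iic (x - 1), gaussDen t
      = ∫ t in (x-1)..x, gaussDen t :=
    intervalIntegral.integral_Iic_sub_Iic gaussDen_integrable.integrableOn gaussDen_integrable.integrableOn
  have hpos : 0 < ∫ t in (x-1)..x, gaussDen t :=
    intervalIntegral.intervalIntegral_pos_of_pos gaussDen_integrable.intervalIntegrable gaussDen_pos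
      (by linarith)
  have hnn : 0 ≤ ∫ t in Set.Iic (x - 1), gaussDen t :=
    setIntegral_nonneg measurableSet_Iic fun t _ => (gaussDen_pos t).le
  linarith

/-- The core monotone function `u ↦ u (ln u − c)/√(u²−1)` on `(1,∞)` for `c ≥ 0`. -/
lemma F_strictMonoOn {c : ℝ} (hc : 0 ≤ c) :
    StrictMonoOn (fun u : ℝ => u * (Real.log u - c) / Real.sqrt (u ^ 2 - 1)) (Set.Ioi 1) := by
  have hder : ∀ u ∈ Set.Ioi (1:ℝ), HasDerivAt
      (fun u : ℝ => u * (Real.log u - c) / Real.sqrt (u ^ 2 - 1))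
      (((1 * (Real.log u - c) + u * u⁻¹) * Real.sqrt (u ^ 2 - 1)
        - u * (Real.log u - c) * (2 * u / (2 * Real.sqrt (u ^ 2 - 1))))
        / Real.sqrt (u ^ 2 - 1) ^ 2) u := by
    intro u hu
    have hu1 : (1:ℝ) < u := hu
    have hu0 : (0:ℝ) < u := by linarith
    have hs : (0:ℝ) < u ^ 2 - 1 := by nlinarith
    have hg : HasDerivAt (fun u : ℝ => u * (Real.log u - c))
        (1 * (Real.log u - c) + u * u⁻¹) u :=
      (hasDerivAt_id u).mul ((Real.hasDerivAt_log hu0.ne').sub_const c)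
    have hsq : HasDerivAt (fun u : ℝ => u ^ 2 - 1) (2 * u) u := by
      simpa using (hasDerivAt_pow 2 u).sub_const 1
    have hh : HasDerivAt (fun u : ℝ => Real.sqrt (u ^ 2 - 1))
        (2 * u / (2 * Real.sqrt (u ^ 2 - 1))) u := hsq.sqrt hs.ne'
    exact hg.div hh (Real.sqrt_pos.2 hs).ne'
  have hopen : interior (Set.Ioi (1:ℝ)) = Set.Ioi 1 := isOpen_Ioi.interior_eq
  apply strictMonoOn_of_deriv_pos (convex_Ioi 1)
  · intro u hu
    exact ((hder u hu).differentiableAt).continuousAt.continuousWithinAt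
  · intro u hu
    rw [hopen] at hu
    have hu1 : (1:ℝ) < u := hu
    have hu0 : (0:ℝ) < u := by linarith
    have hs : (0:ℝ) < u ^ 2 - 1 := by nlinarith
    have ht : (0:ℝ) < Real.sqrt (u ^ 2 - 1) := Real.sqrt_pos.2 hs
    rw [(hder u hu).deriv]
    set t := Real.sqrt (u ^ 2 - 1) with htdef
    have ht2 : t ^ 2 = u ^ 2 - 1 := Real.sq_sqrt hs.le
    apply div_pos
    · have hnum : (1 * (Real.log u - c) + u * u⁻¹) * t
          - u * (Real.log u - c) * (2 * u / (2 * t))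
          = ((Real.log u - c + 1) * t ^ 2 - u ^ 2 * (Real.log u - c)) / t := by
        field_simp
      rw [hnum, ht2]
      apply div_pos _ ht
      have hlog : Real.log u < u - 1 := Real.log_lt_sub_one_of_pos hu0 hu1.ne'
      nlinarith
    · positivity

lemma errProb_eq (mc mr D : ℝ) (hmc : 0 < mc) (hmr : 0 < mr) {z : ℝ} (hz : 0 < z) :
    errProb mc mr D z = gaussQ (Real.sqrt mr *
      ((1 + z * mc / mr) * (Real.log (1 + z * mc / mr) - D * Real.log 2 / mr) /
        Real.sqrt ((1 + z * mc / mr) ^ 2 - 1))) := by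
  set u := 1 + z * mc / mr with hudef
  have hu1 : (1:ℝ) < u := by
    have : 0 < z * mc / mr := by positivity
    simp [hudef]; linarith
  have hu0 : (0:ℝ) < u := by linarith
  have hs : (0:ℝ) < u ^ 2 - 1 := by nlinarith
  unfold errProb
  congr 1
  have h1 : 1 - (u ^ 2)⁻¹ = (u ^ 2 - 1) / u ^ 2 := by
    field_simp
  have h2 : mr / ((u ^ 2 - 1) / u ^ 2) = mr * u ^ 2 / (u ^ 2 - 1) := by
    field_simp
  have h3 : Real.sqrt (mr * u ^ 2 / (u ^ 2 - 1))
      = Real.sqrt mr * u / Real.sqrt (u ^ 2 - 1) := by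
    rw [Real.sqrt_div (by positivity), Real.sqrt_mul hmr.le, Real.sqrt_sq hu0.le]
  have h4 : (Real.logb 2 u - D / mr) * Real.log 2 = Real.log u - D * Real.log 2 / mr := by
    have hl2 : Real.log 2 ≠ 0 := Real.log_ne_zero_of_pos_of_ne_one (by norm_num) (by norm_num)
    rw [Real.logb]
    field_simp
  rw [h1, h2, h3, mul_assoc, h4]
  ring

theorem errProb_avgAoI_strictAnti_in_gain (mc mr D : ℝ)
    (hmc : 0 < mc) (hmr : 0 < mr) (hD : 0 ≤ D) :
    StrictAntiOn (fun z => errProb mc mr D z) (Set.Ioi 0) ∧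
    StrictAntiOn (fun z => avgAoI mc mr D z) (Set.Ioi 0) := by
  set c := D * Real.log 2 / mr with hcdef
  have hc : 0 ≤ c := by
    have : (0:ℝ) ≤ Real.log 2 := Real.log_nonneg (by norm_num)
    positivity
  have hmem : ∀ z : ℝ, 0 < z → (1:ℝ) < 1 + z * mc / mr := by
    intro z hz
    have : 0 < z * mc / mr := by positivity
    linarith
  have hErr : StrictAntiOn (fun z => errProb mc mr D z) (Set.Ioi 0) := by
    intro a ha b hb hab
    simp only [Set.mem_Ioi] at ha hb
    show errProb mc mr D b < errProb mc mr D a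
    rw [errProb_eq mc mr D hmc hmr ha, errProb_eq mc mr D hmc hmr hb]
    apply gaussQ_strictAnti
    have hua : (1:ℝ) < 1 + a * mc / mr := hmem a ha
    have hub : (1:ℝ) < 1 + b * mc / mr := hmem b hb
    have hlt : 1 + a * mc / mr < 1 + b * mc / mr := by
      have : a * mc / mr < b * mc / mr := by
        apply div_lt_div_of_pos_right _ hmr
        exact mul_lt_mul_of_pos_right hab hmc
      linarith
    have := F_strictMonoOn hc hua hub hlt
    exact mul_lt_mul_of_pos_left this (Real.sqrt_pos.2 hmr)
  refine ⟨hErr, ?_⟩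
  intro a ha b hb hab
  simp only [Set.mem_Ioi] at ha hb
  have h1 : errProb mc mr D b < errProb mc mr D a := hErr ha hb hab
  have h2 : errProb mc mr D a < 1 := by
    rw [errProb_eq mc mr D hmc hmr ha]
    exact gaussQ_lt_one _
  have hM : (0:ℝ) < mc + mr := by linarith
  have hpa : (0:ℝ) < 1 - errProb mc mr D a := by linarith
  have hlt : 1 - errProb mc mr D a < 1 - errProb mc mr D b := by linarith
  have := div_lt_div_of_pos_left hM hpa hlt
  show avgAoI mc mr D b < avgAoI mc mr D a
  unfold avgAoI
  linarith
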